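/- Let (a_n) be a sequence of real numbers, let m be a natural number, q > 1, c > 0, and n₀ ∈ ℕ. Suppose that for all n ≥ n₀, a_{n+1} ≤ (1 - q/(n+m)) a_n + c/(n+m)². Then a_n ≤ (c/(q-1)) · (1/n) + o(1/n); in particular, limsup_{n→∞} n·a_n ≤ c/(q-1). -/

import Mathlib

open Filter Asymptotics

lemma harmonic_shift_tendsto (M : ℕ) :
    Tendsto (fun j : ℕ => ∑ i ∈ Finset.range j, (1 : ℝ) / ((i : ℝ) + M)) atTop atTop := by
  have hnn : ∀ i : ℕ, 0 ≤ (1:ℝ) / ((i:ℝ) + M) := fun i => by positivity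
  rw [← not_summable_iff_tendsto_nat_atTop_of_nonneg hnn]
  intro h
  have h2 : Summable (fun n : ℕ => (1:ℝ) / ((n + M : ℕ) : ℝ)) := by
    convert h using 2 with i
    push_cast; ring
  exact Real.not_summable_one_div_natCast ((summable_nat_add_iff M).mp h2)

/-- Chung's lemma. -/
theorem chung_lemma (a : ℕ → ℝ) (m : ℕ) (q c : ℝ) (n₀ : ℕ)
    (hq : 1 < q) (hc : 0 < c)
    (hrec : ∀ n : ℕ, n₀ ≤ n →
      a (n + 1) ≤ (1 - q / ((n : ℝ) + m)) * a n + c / ((n : ℝ) + m) ^ 2) :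
    (∃ e : ℕ → ℝ,
        (fun n => e n) =o[atTop] (fun n => 1 / (n : ℝ)) ∧
        ∀ᶠ n in atTop, a n ≤ c / (q - 1) * (1 / (n : ℝ)) + e n) ∧
      limsup (fun n : ℕ => (n : ℝ) * a n) atTop ≤ c / (q - 1) := by
  have hq1 : (0:ℝ) < q - 1 := by linarith
  set K : ℝ := c / (q - 1) with hKdef
  have hK0 : 0 < K := div_pos hc hq1
  have hcK : c = K * (q - 1) := by rw [hKdef, div_mul_cancel₀ c (ne_of_gt hq1)]
  set t : ℕ → ℝ := fun n => (n : ℝ) + m with ht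
  set w : ℕ → ℝ := fun n => t n * a n - K with hw
  clear_value w t K
  -- core estimate
  have core : ∀ ε : ℝ, 0 < ε → ∀ᶠ n in atTop, w n < ε := by
    intro ε hε
    obtain ⟨N, hN⟩ := exists_nat_gt (max q (n₀ : ℝ))
    have hNq : q < (N : ℝ) := lt_of_le_of_lt (le_max_left _ _) hN
    have hNn₀ : n₀ ≤ N := by
      have h := (lt_of_le_of_lt (le_max_right _ _) hN).le
      exact_mod_cast h
    have htq : ∀ n : ℕ, N ≤ n → q < t n := by
      intro n hn
      have h1 : (N:ℝ) ≤ n := by exact_mod_cast hn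
      have h2 : (0:ℝ) ≤ m := Nat.cast_nonneg m
      simp only [ht]; linarith
    have htpos : ∀ n : ℕ, N ≤ n → 0 < t n := fun n hn => lt_trans (by linarith) (htq n hn)
    -- step inequality
    have hstep : ∀ n : ℕ, N ≤ n → w (n + 1) ≤ ((t n + 1) * (t n - q) / (t n) ^ 2) * w n := by
      intro n hn
      have hp := htpos n hn
      have hrn := hrec n (le_trans hNn₀ hn)
      rw [show ((n:ℝ) + (m:ℝ)) = t n from by rw [ht]] at hrn
      have hmul := mul_le_mul_of_nonneg_left hrn (by linarith : (0:ℝ) ≤ t n + 1)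
      have hKt : 0 < K / (t n) ^ 2 := by positivity
      have hwn1 : w (n + 1) = (t n + 1) * a (n + 1) - K := by
        simp only [hw, ht]; push_cast; ring
      have hid : (t n + 1) * ((1 - q / t n) * a n + c / (t n) ^ 2) - K
          = ((t n + 1) * (t n - q) / (t n) ^ 2) * (t n * a n - K) - K / (t n) ^ 2 := by
        rw [hcK]; field_simp; ring
      rw [hwn1]
      calc (t n + 1) * a (n + 1) - K ≤ (t n + 1) * ((1 - q / t n) * a n + c / (t n) ^ 2) - K := by
            linarith
        _ = ((t n + 1) * (t n - q) / (t n) ^ 2) * w n - K / (t n) ^ 2 := by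
            rw [hid]; simp only [hw]
        _ ≤ ((t n + 1) * (t n - q) / (t n) ^ 2) * w n := by linarith
    have hρ0 : ∀ n : ℕ, N ≤ n → 0 < (t n + 1) * (t n - q) / (t n) ^ 2 := by
      intro n hn
      have h1 := htpos n hn
      have h2 := htq n hn
      have : 0 < (t n + 1) * (t n - q) := mul_pos (by linarith) (by linarith)
      positivity
    have hρ1 : ∀ n : ℕ, N ≤ n → (t n + 1) * (t n - q) / (t n) ^ 2 ≤ 1 - (q - 1) / t n := by
      intro n hn
      have h1 := htpos n hn
      rw [div_le_iff₀ (by positivity : (0:ℝ) < (t n) ^ 2)]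
      have hexp : (1 - (q - 1) / t n) * t n ^ 2 = t n ^ 2 - (q - 1) * t n := by
        field_simp
      rw [hexp]
      nlinarith
    -- Step A : find n₁ ≥ N with w n₁ < ε
    have stepA : ∃ n₁ : ℕ, N ≤ n₁ ∧ w n₁ < ε := by
      by_contra hbad
      push_neg at hbad
      have hge : ∀ n : ℕ, N ≤ n → ε ≤ w n := fun n hn => hbad n hn
      have hdec : ∀ n : ℕ, N ≤ n → w (n + 1) ≤ w n - (q - 1) * ε / t n := by
        intro n hn
        have hp := htpos n hn
        have h1 := hstep n hn
        have h2 := hρ1 n hn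
        have h3 := hge n hn
        have h4 : 0 < (q - 1) / t n := by positivity
        have h5 : ((t n + 1) * (t n - q) / (t n) ^ 2) * w n ≤ (1 - (q - 1) / t n) * w n :=
          mul_le_mul_of_nonneg_right h2 (by linarith)
        have h6 : (q - 1) / t n * ε ≤ (q - 1) / t n * w n :=
          mul_le_mul_of_nonneg_left h3 (le_of_lt h4)
        have h7 : (q - 1) / t n * ε = (q - 1) * ε / t n := by ring
        nlinarith
      have hsum : ∀ j : ℕ, w (N + j) ≤ w N - (q - 1) * ε * ∑ i ∈ Finset.range j, 1 / t (N + i) := by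
        intro j
        induction j with
        | zero => simp
        | succ k ih =>
          have h1 := hdec (N + k) (Nat.le_add_right N k)
          rw [Finset.sum_range_succ]
          have hp := htpos (N + k) (Nat.le_add_right N k)
          have : (q - 1) * ε / t (N + k) = (q - 1) * ε * (1 / t (N + k)) := by ring
          have h2 : w (N + (k + 1)) = w (N + k + 1) := by ring_nf
          rw [h2]
          calc w (N + k + 1) ≤ w (N + k) - (q - 1) * ε / t (N + k) := h1
            _ ≤ w N - (q - 1) * ε * ∑ i ∈ Finset.range k, 1 / t (N + i)
                - (q - 1) * ε * (1 / t (N + k)) := by rw [← this]; linarith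
            _ = w N - (q - 1) * ε * (∑ i ∈ Finset.range k, 1 / t (N + i) + 1 / t (N + k)) := by
                ring
      have hdiv : Tendsto (fun j : ℕ => ∑ i ∈ Finset.range j, 1 / t (N + i)) atTop atTop := by
        have := harmonic_shift_tendsto (N + m)
        convert this using 3 with j i
        simp only [ht]; push_cast; ring
      have hC : 0 < (q - 1) * ε := by positivity
      obtain ⟨j, hj⟩ := (hdiv.eventually_ge_atTop ((w N - ε) / ((q - 1) * ε) + 1)).exists
      have h8 : (q - 1) * ε * ((w N - ε) / ((q - 1) * ε) + 1) = w N - ε + (q - 1) * ε := by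
        field_simp
      have h9 := hsum j
      have h10 : (q - 1) * ε * ((w N - ε) / ((q - 1) * ε) + 1)
          ≤ (q - 1) * ε * ∑ i ∈ Finset.range j, 1 / t (N + i) :=
        mul_le_mul_of_nonneg_left hj (le_of_lt hC)
      have h11 := hge (N + j) (Nat.le_add_right N j)
      have h12 : w N - ε + (q - 1) * ε ≤ (q - 1) * ε * ∑ i ∈ Finset.range j, 1 / t (N + i) := by
        rw [← h8]; exact h10
      linarith
    obtain ⟨n₁, hn₁N, hn₁⟩ := stepA
    -- Step B : w stays below ε
    have stepB : ∀ n : ℕ, n₁ ≤ n → w n < ε := by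
      intro n hn
      induction n, hn using Nat.le_induction with
      | base => exact hn₁
      | succ k hk ihk =>
        have hkN : N ≤ k := le_trans hn₁N hk
        have h1 := hstep k hkN
        have h2 := hρ0 k hkN
        have h3 := hρ1 k hkN
        have hp := htpos k hkN
        rcases le_or_gt (w k) 0 with hwk | hwk
        · have h6 : ((t k + 1) * (t k - q) / (t k) ^ 2) * w k ≤ 0 :=
            mul_nonpos_of_nonneg_of_nonpos (le_of_lt h2) hwk
          exact lt_of_le_of_lt (h1.trans h6) hε
        · have h4 : 0 < (q - 1) / t k := by positivity
          have h5 : (t k + 1) * (t k - q) / (t k) ^ 2 ≤ 1 := by linarith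
          have h6 : ((t k + 1) * (t k - q) / (t k) ^ 2) * w k ≤ 1 * w k :=
            mul_le_mul_of_nonneg_right h5 (le_of_lt hwk)
          rw [one_mul] at h6
          exact lt_of_le_of_lt (h1.trans h6) ihk
    filter_upwards [eventually_ge_atTop n₁] with n hn using stepB n hn
  -- consequence : n * a n ≤ K + ε eventually
  have core2 : ∀ ε : ℝ, 0 < ε → ∀ᶠ n : ℕ in atTop, (n : ℝ) * a n ≤ K + ε := by
    intro ε hε
    filter_upwards [core ε hε] with n hn
    have hm : (0:ℝ) ≤ m := Nat.cast_nonneg m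
    have hn0 : (0:ℝ) ≤ n := Nat.cast_nonneg n
    have htn : t n = (n:ℝ) + m := by rw [ht]
    rcases le_or_gt 0 (a n) with ha | ha
    · have : (n:ℝ) * a n ≤ t n * a n := by
        rw [htn]; nlinarith
      simp only [hw] at hn; linarith
    · nlinarith
  constructor
  · refine ⟨fun n => max (a n - K * (1 / (n:ℝ))) 0, ?_, ?_⟩
    · rw [isLittleO_iff]
      intro ε hε
      filter_upwards [core2 ε hε, eventually_ge_atTop 1] with n hn hn1
      have hnpos : (0:ℝ) < n := by exact_mod_cast hn1
      have h2 : a n - K * (1 / (n:ℝ)) ≤ ε * (1 / (n:ℝ)) := by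
        have h3 : a n ≤ (K + ε) / n := by
          rw [le_div_iff₀ hnpos]; linarith
        have h4 : (K + ε) / (n:ℝ) = K * (1/(n:ℝ)) + ε * (1/(n:ℝ)) := by ring
        linarith
      rw [Real.norm_eq_abs, Real.norm_eq_abs, abs_of_nonneg (le_max_right _ _),
        abs_of_nonneg (by positivity : (0:ℝ) ≤ 1 / (n:ℝ))]
      exact max_le h2 (by positivity)
    · filter_upwards with n
      have := le_max_left (a n - K * (1 / (n:ℝ))) 0
      linarith
  · rw [limsup_eq]
    by_cases hbb : BddBelow {b : ℝ | ∀ᶠ n : ℕ in atTop, (n : ℝ) * a n ≤ b}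
    · apply le_of_forall_pos_le_add
      intro ε hε
      exact csInf_le hbb (core2 ε hε)
    · rw [Real.sInf_of_not_bddBelow hbb]
      exact le_of_lt hK0
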